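/- Define V(x₁,x₂,x₃) = (x₁ + 2x₂ + x₃)² + 2x₃² + 2x₃·sin(x₂) - 4·cos(x₂) + 4 on ℝ³. Then along solutions of the closed-loop system ẋ₁ = sin(x₂), ẋ₂ = x₃, ẋ₃ = -x₁ - 2x₂ - 3x₃ - sin(x₂), the derivative of V equals -(4 - 2cos(x₂))x₃² - (x₁ + 2x₂ + x₃)² - sin²(x₂) - (x₁ + 2x₂ + 3x₃ + sin(x₂))², which is ≤ 0 everywhere and strictly negative whenever x₂ ∈ (-π, π) and (x₁,x₂,x₃) ≠ (0,0,0). -/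

import Mathlib

open Real

/-- Third-order unicycle example: along `ẋ₁ = sin x₂, ẋ₂ = x₃,
`ẋ₃ = -x₁-2x₂-3x₃-sin x₂`, the derivative of
`V = (x₁+2x₂+x₃)² + 2x₃² + 2x₃ sin x₂ - 4cos x₂ + 4` equals
`-(4-2cos x₂)x₃² - (x₁+2x₂+x₃)² - sin²x₂ - (x₁+2x₂+3x₃+sin x₂)² ≤ 0`,
strictly negative for `x₂ ∈ (-π,π)`, `(x₁,x₂,x₃) ≠ 0`. -/
theorem stmt_13 (V : ℝ → ℝ → ℝ → ℝ)
    (hV : ∀ x₁ x₂ x₃, V x₁ x₂ x₃ =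
      (x₁ + 2 * x₂ + x₃) ^ 2 + 2 * x₃ ^ 2 + 2 * x₃ * Real.sin x₂
        - 4 * Real.cos x₂ + 4) :
    ∀ x₁ x₂ x₃ : ℝ,
      (deriv (fun y => V y x₂ x₃) x₁ * Real.sin x₂
        + deriv (fun y => V x₁ y x₃) x₂ * x₃
        + deriv (fun y => V x₁ x₂ y) x₃
            * (-x₁ - 2 * x₂ - 3 * x₃ - Real.sin x₂)
        = -(4 - 2 * Real.cos x₂) * x₃ ^ 2 - (x₁ + 2 * x₂ + x₃) ^ 2
          - Real.sin x₂ ^ 2 - (x₁ + 2 * x₂ + 3 * x₃ + Real.sin x₂) ^ 2) ∧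
      (-(4 - 2 * Real.cos x₂) * x₃ ^ 2 - (x₁ + 2 * x₂ + x₃) ^ 2
          - Real.sin x₂ ^ 2 - (x₁ + 2 * x₂ + 3 * x₃ + Real.sin x₂) ^ 2 ≤ 0) ∧
      (x₂ ∈ Set.Ioo (-Real.pi) Real.pi → (x₁, x₂, x₃) ≠ (0, 0, 0) →
        -(4 - 2 * Real.cos x₂) * x₃ ^ 2 - (x₁ + 2 * x₂ + x₃) ^ 2
          - Real.sin x₂ ^ 2 - (x₁ + 2 * x₂ + 3 * x₃ + Real.sin x₂) ^ 2 < 0) := by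
  intro x₁ x₂ x₃
  have hcos := Real.cos_le_one x₂
  refine ⟨?_, ?_, ?_⟩
  · have h1 : deriv (fun y => V y x₂ x₃) x₁ = 2 * (x₁ + 2 * x₂ + x₃) := by
      have hf : (fun y => V y x₂ x₃) = fun y =>
          (y + 2 * x₂ + x₃) ^ 2 + 2 * x₃ ^ 2 + 2 * x₃ * Real.sin x₂
            - 4 * Real.cos x₂ + 4 := funext fun y => hV y x₂ x₃
      rw [hf]
      have h : HasDerivAt (fun y : ℝ =>
          (y + 2 * x₂ + x₃) ^ 2 + 2 * x₃ ^ 2 + 2 * x₃ * Real.sin x₂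
            - 4 * Real.cos x₂ + 4) (2 * (x₁ + 2 * x₂ + x₃)) x₁ := by
        have H := (((((((hasDerivAt_id x₁).add_const (2 * x₂)).add_const x₃).pow 2
          ).add_const (2 * x₃ ^ 2)).add_const (2 * x₃ * Real.sin x₂)
          ).sub_const (4 * Real.cos x₂)).add_const 4
        refine H.congr_deriv ?_
        norm_num; try ring
      exact h.deriv
    have h2 : deriv (fun y => V x₁ y x₃) x₂ =
        4 * (x₁ + 2 * x₂ + x₃) + 2 * x₃ * Real.cos x₂ + 4 * Real.sin x₂ := by
      have hf : (fun y => V x₁ y x₃) = fun y =>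
          (x₁ + 2 * y + x₃) ^ 2 + 2 * x₃ ^ 2 + 2 * x₃ * Real.sin y
            - 4 * Real.cos y + 4 := funext fun y => hV x₁ y x₃
      rw [hf]
      have h : HasDerivAt (fun y : ℝ =>
          (x₁ + 2 * y + x₃) ^ 2 + 2 * x₃ ^ 2 + 2 * x₃ * Real.sin y
            - 4 * Real.cos y + 4)
          (4 * (x₁ + 2 * x₂ + x₃) + 2 * x₃ * Real.cos x₂ + 4 * Real.sin x₂) x₂ := by
        have ha := ((((hasDerivAt_id x₂).const_mul 2).const_add x₁).add_const x₃).pow 2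
        have hb := (Real.hasDerivAt_sin x₂).const_mul (2 * x₃)
        have hc := (Real.hasDerivAt_cos x₂).const_mul 4
        have H := ((((ha.add_const (2 * x₃ ^ 2)).add hb).sub hc).add_const 4)
        refine H.congr_deriv ?_
        norm_num; try ring
      exact h.deriv
    have h3 : deriv (fun y => V x₁ x₂ y) x₃ =
        2 * (x₁ + 2 * x₂ + x₃) + 4 * x₃ + 2 * Real.sin x₂ := by
      have hf : (fun y => V x₁ x₂ y) = fun y =>
          (x₁ + 2 * x₂ + y) ^ 2 + 2 * y ^ 2 + 2 * y * Real.sin x₂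
            - 4 * Real.cos x₂ + 4 := funext fun y => hV x₁ x₂ y
      rw [hf]
      have h : HasDerivAt (fun y : ℝ =>
          (x₁ + 2 * x₂ + y) ^ 2 + 2 * y ^ 2 + 2 * y * Real.sin x₂
            - 4 * Real.cos x₂ + 4)
          (2 * (x₁ + 2 * x₂ + x₃) + 4 * x₃ + 2 * Real.sin x₂) x₃ := by
        have ha := (((hasDerivAt_id x₃).const_add (x₁ + 2 * x₂)).pow 2)
        have hb := (((hasDerivAt_id x₃).pow 2).const_mul 2)
        have hc := (((hasDerivAt_id x₃).const_mul 2).mul_const (Real.sin x₂))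
        have H := (((ha.add hb).add hc).sub_const (4 * Real.cos x₂)).add_const 4
        refine H.congr_deriv ?_
        norm_num; try ring
      exact h.deriv
    rw [h1, h2, h3]
    have hsc : Real.sin x₂ ^ 2 + Real.cos x₂ ^ 2 = 1 := Real.sin_sq_add_cos_sq x₂
    nlinarith [hsc]
  · nlinarith [sq_nonneg (x₁ + 2 * x₂ + x₃), sq_nonneg (Real.sin x₂), sq_nonneg (x₁ + 2 * x₂ + 3 * x₃ + Real.sin x₂), sq_nonneg x₃]
  · rintro ⟨hl, hr⟩ hne
    by_contra h
    push_neg at h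
    have h3 : x₃ = 0 := by
      nlinarith [sq_nonneg (x₁ + 2 * x₂ + x₃), sq_nonneg (Real.sin x₂), sq_nonneg (x₁ + 2 * x₂ + 3 * x₃ + Real.sin x₂), sq_nonneg x₃]
    subst h3
    have hs : Real.sin x₂ = 0 := by
      nlinarith [sq_nonneg (x₁ + 2 * x₂), sq_nonneg (Real.sin x₂), sq_nonneg (x₁ + 2 * x₂ + Real.sin x₂)]
    have h2 : x₂ = 0 := (Real.sin_eq_zero_iff_of_lt_of_lt hl hr).mp hs
    subst h2
    have h1 : x₁ = 0 := by
      simp only [Real.sin_zero, Real.cos_zero] at h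
      nlinarith [sq_nonneg x₁]
    exact hne (by simp [h1])
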